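/- Let M ⪰ μI and N ⪰ μI be positive definite block matrices partitioned as M = [[M₁₁, M₁₂],[M₁₂ᵀ, M₂₂]] and similarly for N (with state block of size n and lower-right block of size d). Define T(M) = −M₂₂^{-1} M₁₂ᵀ. Then ‖T(M) − T(N)‖ ≤ (1 + ‖T(N)‖)‖M − N‖ / μ. -/

import Mathlib

open Matrix MeasureTheory ProbabilityTheory
open scoped Classical RealInnerProductSpace

/-- Operator (spectral) norm of a real matrix. -/
noncomputable def opNorm {m n : Type*} [Fintype m] [Fintype n] [DecidableEq n]
    (A : Matrix m n ℝ) : ℝ :=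
  ‖LinearMap.toContinuousLinearMap (Matrix.toEuclideanLin A)‖

/-- Frobenius norm of a real matrix. -/
noncomputable def frob {m n : Type*} [Fintype m] [Fintype n] (A : Matrix m n ℝ) : ℝ :=
  Real.sqrt (∑ i, ∑ j, (A i j) ^ 2)

/-- Positive semidefinite square root (junk value `0` off the PSD matrices). -/
noncomputable def sqrtPD {n : Type*} [Fintype n] [DecidableEq n]
    (A : Matrix n n ℝ) : Matrix n n ℝ :=
  if h : A.PosSemidef then
    (h.1.eigenvectorUnitary : Matrix n n ℝ) *
      Matrix.diagonal ((↑) ∘ (Real.sqrt ·) ∘ h.1.eigenvalues) *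
      (star (h.1.eigenvectorUnitary : Matrix n n ℝ))
  else 0

/-- Matrix logarithm of a hermitian matrix via the spectral theorem
(junk value `0` off the hermitian matrices). -/
noncomputable def mlog {n : Type*} [Fintype n] [DecidableEq n]
    (A : Matrix n n ℝ) : Matrix n n ℝ :=
  if h : A.IsHermitian then
    (h.eigenvectorUnitary : Matrix n n ℝ) * Matrix.diagonal (Real.log ∘ h.eigenvalues) *
      (star (h.eigenvectorUnitary : Matrix n n ℝ))
  else 0

/-- Thompson (invariant) metric `δ∞(A,B) = ‖log (A^{-1/2} B A^{-1/2})‖`. -/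
noncomputable def thompson {n : Type*} [Fintype n] [DecidableEq n]
    (A B : Matrix n n ℝ) : ℝ :=
  opNorm (mlog ((sqrtPD A)⁻¹ * B * (sqrtPD A)⁻¹))

/-- Largest (real) eigenvalue. -/
noncomputable def lamMax {n : Type*} [Fintype n] [DecidableEq n] (A : Matrix n n ℝ) : ℝ :=
  sSup (spectrum ℝ A)

/-- Smallest (real) eigenvalue. -/
noncomputable def lamMin {n : Type*} [Fintype n] [DecidableEq n] (A : Matrix n n ℝ) : ℝ :=
  sInf (spectrum ℝ A)

/-- Solution `P = Σ_{k≥0} (Lᵀ)^k M L^k` of the discrete Lyapunov equation `P = Lᵀ P L + M`. -/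
noncomputable def dlyap {n : Type*} [Fintype n] [DecidableEq n]
    (L M : Matrix n n ℝ) : Matrix n n ℝ :=
  ∑' k : ℕ, (L ^ k)ᵀ * M * (L ^ k)

/-- `K` stabilizes `(A,B)`: the closed loop matrix `A + BK` has spectral radius `< 1`. -/
def Stabilizes {n d : Type*} [Fintype n] [DecidableEq n] [Fintype d]
    (A : Matrix n n ℝ) (B : Matrix n d ℝ) (K : Matrix d n ℝ) : Prop :=
  ∀ z ∈ spectrum ℂ ((A + B * K).map ((↑) : ℝ → ℂ)), ‖z‖ < 1

set_option linter.unusedSectionVars false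
section Aux

variable {m p q : Type*} [Fintype m] [Fintype p] [Fintype q]
  [DecidableEq m] [DecidableEq p] [DecidableEq q]

lemma opNorm_nonneg' (A : Matrix m p ℝ) : 0 ≤ opNorm A := norm_nonneg _

lemma opNorm_neg' (A : Matrix m p ℝ) : opNorm (-A) = opNorm A := by
  unfold opNorm; rw [map_neg, map_neg, norm_neg]

lemma opNorm_add_le' (A B : Matrix m p ℝ) : opNorm (A + B) ≤ opNorm A + opNorm B := by
  unfold opNorm; rw [map_add, map_add]; exact norm_add_le _ _

lemma opNorm_mul_le' (A : Matrix m p ℝ) (B : Matrix p q ℝ) :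
    opNorm (A * B) ≤ opNorm A * opNorm B := by
  unfold opNorm
  have h : LinearMap.toContinuousLinearMap (Matrix.toEuclideanLin (A * B)) =
      (LinearMap.toContinuousLinearMap (Matrix.toEuclideanLin A)).comp
        (LinearMap.toContinuousLinearMap (Matrix.toEuclideanLin B)) := by
    ext x
    simp [Matrix.toEuclideanLin_apply, Matrix.mulVec_mulVec]
  rw [h]
  exact ContinuousLinearMap.opNorm_comp_le _ _

lemma opNorm_transpose' (A : Matrix m p ℝ) : opNorm Aᵀ = opNorm A := by
  have h : (Aᵀ : Matrix p m ℝ) = Aᴴ := by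
    ext i j; simp [Matrix.conjTranspose_apply]
  unfold opNorm
  rw [h, Matrix.toEuclideanLin_conjTranspose_eq_adjoint,
    LinearMap.adjoint_toContinuousLinearMap]
  exact ContinuousLinearMap.adjoint.norm_map _

lemma opNorm_le_bound' (A : Matrix m p ℝ) {c : ℝ} (hc : 0 ≤ c)
    (h : ∀ x : p → ℝ, ‖(WithLp.equiv 2 (m → ℝ)).symm (A *ᵥ x)‖ ≤
      c * ‖(WithLp.equiv 2 (p → ℝ)).symm x‖) : opNorm A ≤ c := by
  refine ContinuousLinearMap.opNorm_le_bound _ hc fun x => ?_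
  have := h ((WithLp.equiv 2 (p → ℝ)) x)
  simpa [Matrix.toEuclideanLin_apply] using this

lemma le_opNorm' (A : Matrix m p ℝ) (x : p → ℝ) :
    ‖(WithLp.equiv 2 (m → ℝ)).symm (A *ᵥ x)‖ ≤
      opNorm A * ‖(WithLp.equiv 2 (p → ℝ)).symm x‖ := by
  have := (LinearMap.toContinuousLinearMap (Matrix.toEuclideanLin A)).le_opNorm
    ((WithLp.equiv 2 (p → ℝ)).symm x)
  simpa [opNorm, Matrix.toEuclideanLin_apply] using this

lemma elim_norm_eq (x : p → ℝ) :
    ‖(WithLp.equiv 2 ((m ⊕ p) → ℝ)).symm (Sum.elim 0 x)‖ =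
      ‖(WithLp.equiv 2 (p → ℝ)).symm x‖ := by
  simp only [EuclideanSpace.norm_eq, WithLp.equiv_symm_apply, PiLp.toLp_apply]
  congr 1
  rw [Fintype.sum_sum_type]
  simp

lemma opNorm_toBlocks₁₂_le (A : Matrix (m ⊕ p) (m ⊕ p) ℝ) :
    opNorm A.toBlocks₁₂ ≤ opNorm A := by
  refine opNorm_le_bound' _ (opNorm_nonneg' A) fun x => ?_
  have happ : ∀ i, (A *ᵥ Sum.elim 0 x) (Sum.inl i) = (A.toBlocks₁₂ *ᵥ x) i := by
    intro i
    simp [Matrix.mulVec, dotProduct, Fintype.sum_sum_type, Matrix.toBlocks₁₂]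
  have hle : ‖(WithLp.equiv 2 (m → ℝ)).symm (A.toBlocks₁₂ *ᵥ x)‖ ≤
      ‖(WithLp.equiv 2 ((m ⊕ p) → ℝ)).symm (A *ᵥ Sum.elim 0 x)‖ := by
    simp only [EuclideanSpace.norm_eq, WithLp.equiv_symm_apply, PiLp.toLp_apply]
    apply Real.sqrt_le_sqrt
    rw [Fintype.sum_sum_type]
    have h1 : ∑ i : m, ‖(A.toBlocks₁₂ *ᵥ x) i‖ ^ 2 =
        ∑ i : m, ‖(A *ᵥ Sum.elim 0 x) (Sum.inl i)‖ ^ 2 := by simp [happ]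
    rw [h1]
    exact le_add_of_nonneg_right (Finset.sum_nonneg fun i _ => by positivity)
  calc ‖(WithLp.equiv 2 (m → ℝ)).symm (A.toBlocks₁₂ *ᵥ x)‖ ≤ _ := hle
    _ ≤ opNorm A * ‖(WithLp.equiv 2 ((m ⊕ p) → ℝ)).symm (Sum.elim 0 x)‖ := le_opNorm' _ _
    _ = opNorm A * ‖(WithLp.equiv 2 (p → ℝ)).symm x‖ := by rw [elim_norm_eq]

lemma opNorm_toBlocks₂₂_le (A : Matrix (m ⊕ p) (m ⊕ p) ℝ) :
    opNorm A.toBlocks₂₂ ≤ opNorm A := by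
  refine opNorm_le_bound' _ (opNorm_nonneg' A) fun x => ?_
  have happ : ∀ i, (A *ᵥ Sum.elim 0 x) (Sum.inr i) = (A.toBlocks₂₂ *ᵥ x) i := by
    intro i
    simp [Matrix.mulVec, dotProduct, Fintype.sum_sum_type, Matrix.toBlocks₂₂]
  have hle : ‖(WithLp.equiv 2 (p → ℝ)).symm (A.toBlocks₂₂ *ᵥ x)‖ ≤
      ‖(WithLp.equiv 2 ((m ⊕ p) → ℝ)).symm (A *ᵥ Sum.elim 0 x)‖ := by
    simp only [EuclideanSpace.norm_eq, WithLp.equiv_symm_apply, PiLp.toLp_apply]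
    apply Real.sqrt_le_sqrt
    rw [Fintype.sum_sum_type]
    have h1 : ∑ i : p, ‖(A.toBlocks₂₂ *ᵥ x) i‖ ^ 2 =
        ∑ i : p, ‖(A *ᵥ Sum.elim 0 x) (Sum.inr i)‖ ^ 2 := by simp [happ]
    rw [h1]
    exact le_add_of_nonneg_left (Finset.sum_nonneg fun i _ => by positivity)
  calc ‖(WithLp.equiv 2 (p → ℝ)).symm (A.toBlocks₂₂ *ᵥ x)‖ ≤ _ := hle
    _ ≤ opNorm A * ‖(WithLp.equiv 2 ((m ⊕ p) → ℝ)).symm (Sum.elim 0 x)‖ := le_opNorm' _ _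
    _ = opNorm A * ‖(WithLp.equiv 2 (p → ℝ)).symm x‖ := by rw [elim_norm_eq]

lemma dotProduct_eq_inner (u v : p → ℝ) :
    u ⬝ᵥ v = ⟪(WithLp.equiv 2 (p → ℝ)).symm u, (WithLp.equiv 2 (p → ℝ)).symm v⟫ := by
  simp [PiLp.inner_apply, dotProduct, RCLike.inner_apply, mul_comm]

lemma opNorm_inv_le (A : Matrix p p ℝ) {μ : ℝ} (hμ : 0 < μ)
    (h : (A - μ • 1).PosSemidef) : opNorm A⁻¹ ≤ 1 / μ := by
  have hone : ((μ • 1 : Matrix p p ℝ)).PosDef := by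
    have hd : (μ • 1 : Matrix p p ℝ) = Matrix.diagonal (fun _ => μ) := by
      ext i j; by_cases hij : i = j <;> simp [Matrix.one_apply, hij]
    rw [hd]
    exact Matrix.posDef_diagonal_iff.mpr fun _ => hμ
  have hApd : A.PosDef := by
    have := Matrix.PosDef.posSemidef_add h hone
    simpa using this
  have hAinv : A * A⁻¹ = 1 := Matrix.mul_nonsing_inv _ hApd.det_pos.ne'.isUnit
  refine opNorm_le_bound' _ (by positivity) fun x => ?_
  set y : p → ℝ := A⁻¹ *ᵥ x with hy
  have hxy : A *ᵥ y = x := by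
    rw [hy, Matrix.mulVec_mulVec, hAinv, Matrix.one_mulVec]
  have hps := h.dotProduct_mulVec_nonneg y
  have hsy : star y = y := by simp
  rw [hsy, Matrix.sub_mulVec, dotProduct_sub, sub_nonneg, Matrix.smul_mulVec,
    Matrix.one_mulVec, dotProduct_smul, hxy] at hps
  set ey := (WithLp.equiv 2 (p → ℝ)).symm y with hey
  set ex := (WithLp.equiv 2 (p → ℝ)).symm x with hex
  have hyy : y ⬝ᵥ y = ‖ey‖ ^ 2 := by
    rw [dotProduct_eq_inner, ← hey, real_inner_self_eq_norm_sq]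
  have hin : y ⬝ᵥ x ≤ ‖ey‖ * ‖ex‖ := by
    rw [dotProduct_eq_inner, ← hey, ← hex]
    exact real_inner_le_norm _ _
  have hkey : μ * ‖ey‖ ^ 2 ≤ ‖ey‖ * ‖ex‖ := by
    calc μ * ‖ey‖ ^ 2 = μ • (y ⬝ᵥ y) := by rw [hyy]; simp
      _ ≤ y ⬝ᵥ x := hps
      _ ≤ ‖ey‖ * ‖ex‖ := hin
  rcases eq_or_lt_of_le (norm_nonneg ey) with h0 | h0
  · rw [← h0]; positivity
  · have h2 : μ * ‖ey‖ ≤ ‖ex‖ := by nlinarith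
    calc ‖ey‖ = (μ * ‖ey‖) / μ := by field_simp
      _ ≤ ‖ex‖ / μ := by gcongr
      _ = 1 / μ * ‖ex‖ := by ring

lemma toBlocks₂₂_sub_smul_posSemidef (M : Matrix (m ⊕ p) (m ⊕ p) ℝ) {μ : ℝ}
    (h : (M - μ • 1).PosSemidef) : (M.toBlocks₂₂ - μ • 1).PosSemidef := by
  have h2 := h.submatrix Sum.inr
  have e : (M - μ • (1 : Matrix (m ⊕ p) (m ⊕ p) ℝ)).submatrix Sum.inr Sum.inr =
      M.toBlocks₂₂ - μ • 1 := by
    ext i j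
    by_cases hij : i = j <;>
      simp [Matrix.submatrix_apply, Matrix.one_apply, Matrix.toBlocks₂₂, hij]
  rwa [e] at h2

end Aux

/-- Perturbation bound for the map `M ↦ -M₂₂⁻¹ M₁₂ᵀ` on block positive definite matrices. -/
theorem control_map_perturbation {n d : ℕ} (μ : ℝ) (hμ : 0 < μ)
    (M N : Matrix (Fin n ⊕ Fin d) (Fin n ⊕ Fin d) ℝ)
    (hM : M.PosDef) (hN : N.PosDef)
    (hMμ : (M - μ • (1 : Matrix (Fin n ⊕ Fin d) (Fin n ⊕ Fin d) ℝ)).PosSemidef)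
    (hNμ : (N - μ • (1 : Matrix (Fin n ⊕ Fin d) (Fin n ⊕ Fin d) ℝ)).PosSemidef) :
    opNorm (-(M.toBlocks₂₂)⁻¹ * (M.toBlocks₁₂)ᵀ - -(N.toBlocks₂₂)⁻¹ * (N.toBlocks₁₂)ᵀ) ≤
      (1 + opNorm (-(N.toBlocks₂₂)⁻¹ * (N.toBlocks₁₂)ᵀ)) * opNorm (M - N) / μ := by
  have hA22 : (M.toBlocks₂₂ - μ • 1).PosSemidef := toBlocks₂₂_sub_smul_posSemidef M hMμ
  have hB22 : (N.toBlocks₂₂ - μ • 1).PosSemidef := toBlocks₂₂_sub_smul_posSemidef N hNμ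
  have hone : ((μ • 1 : Matrix (Fin d) (Fin d) ℝ)).PosDef := by
    have hd : (μ • 1 : Matrix (Fin d) (Fin d) ℝ) = Matrix.diagonal (fun _ => μ) := by
      ext i j; by_cases hij : i = j <;> simp [Matrix.one_apply, hij]
    rw [hd]
    exact Matrix.posDef_diagonal_iff.mpr fun _ => hμ
  have hApd : (M.toBlocks₂₂).PosDef := by simpa using Matrix.PosDef.posSemidef_add hA22 hone
  have hBpd : (N.toBlocks₂₂).PosDef := by simpa using Matrix.PosDef.posSemidef_add hB22 hone
  have hA1 : (M.toBlocks₂₂)⁻¹ * M.toBlocks₂₂ = 1 :=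
    Matrix.nonsing_inv_mul _ hApd.det_pos.ne'.isUnit
  have hB1 : N.toBlocks₂₂ * (N.toBlocks₂₂)⁻¹ = 1 :=
    Matrix.mul_nonsing_inv _ hBpd.det_pos.ne'.isUnit
  set A := M.toBlocks₂₂ with hA
  set B := N.toBlocks₂₂ with hB
  set P := (M.toBlocks₁₂)ᵀ with hP
  set Q := (N.toBlocks₁₂)ᵀ with hQ
  have e1 : ((N - M).toBlocks₁₂)ᵀ = Q - P := by
    ext i j; simp [hP, hQ, Matrix.toBlocks₁₂]
  have e2 : (M - N).toBlocks₂₂ = A - B := by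
    ext i j; simp [hA, hB, Matrix.toBlocks₂₂]
  have key : -A⁻¹ * P - -B⁻¹ * Q =
      A⁻¹ * (((N - M).toBlocks₁₂)ᵀ + (M - N).toBlocks₂₂ * (B⁻¹ * Q)) := by
    rw [e1, e2]
    have e3 : A⁻¹ * (A * (B⁻¹ * Q)) = B⁻¹ * Q := by
      rw [← Matrix.mul_assoc, hA1, Matrix.one_mul]
    have e4 : A⁻¹ * (B * (B⁻¹ * Q)) = A⁻¹ * Q := by
      rw [← Matrix.mul_assoc B B⁻¹ Q, hB1, Matrix.one_mul]
    rw [Matrix.mul_add, Matrix.mul_sub, Matrix.sub_mul, Matrix.mul_sub, e3, e4,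
      Matrix.neg_mul, Matrix.neg_mul]
    abel
  have hAinv : opNorm A⁻¹ ≤ 1 / μ := opNorm_inv_le A hμ hA22
  have h12 : opNorm (((N - M).toBlocks₁₂)ᵀ) ≤ opNorm (M - N) := by
    rw [opNorm_transpose']
    calc opNorm ((N - M).toBlocks₁₂) ≤ opNorm (N - M) := opNorm_toBlocks₁₂_le _
      _ = opNorm (M - N) := by rw [← opNorm_neg' (N - M), neg_sub]
  have h22 : opNorm ((M - N).toBlocks₂₂) ≤ opNorm (M - N) := opNorm_toBlocks₂₂_le _
  have hTN : opNorm (B⁻¹ * Q) = opNorm (-B⁻¹ * Q) := by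
    rw [Matrix.neg_mul, opNorm_neg']
  calc opNorm (-A⁻¹ * P - -B⁻¹ * Q)
      = opNorm (A⁻¹ * (((N - M).toBlocks₁₂)ᵀ + (M - N).toBlocks₂₂ * (B⁻¹ * Q))) := by rw [key]
    _ ≤ opNorm A⁻¹ * opNorm (((N - M).toBlocks₁₂)ᵀ + (M - N).toBlocks₂₂ * (B⁻¹ * Q)) :=
        opNorm_mul_le' _ _
    _ ≤ (1 / μ) * (opNorm (M - N) + opNorm (M - N) * opNorm (-B⁻¹ * Q)) := by
        apply mul_le_mul hAinv _ (opNorm_nonneg' _) (by positivity)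
        calc opNorm (((N - M).toBlocks₁₂)ᵀ + (M - N).toBlocks₂₂ * (B⁻¹ * Q))
            ≤ opNorm (((N - M).toBlocks₁₂)ᵀ) + opNorm ((M - N).toBlocks₂₂ * (B⁻¹ * Q)) :=
              opNorm_add_le' _ _
          _ ≤ opNorm (M - N) + opNorm (M - N) * opNorm (-B⁻¹ * Q) := by
              refine add_le_add h12 ?_
              calc opNorm ((M - N).toBlocks₂₂ * (B⁻¹ * Q))
                  ≤ opNorm ((M - N).toBlocks₂₂) * opNorm (B⁻¹ * Q) := opNorm_mul_le' _ _
                _ ≤ opNorm (M - N) * opNorm (-B⁻¹ * Q) := by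
                    rw [← hTN]
                    exact mul_le_mul_of_nonneg_right h22 (opNorm_nonneg' _)
    _ = (1 + opNorm (-B⁻¹ * Q)) * opNorm (M - N) / μ := by ring
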